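/- arXiv:1210.3849 — 2 statements merged into one kernel-verified Lean document; each statement's English description precedes it below -/
import Mathlib

section
/- For every ρ > 0, the bivariate Clayton copula is 2-increasing: for all a₁, b₁, a₂, b₂ with 0 < a₁ ≤ b₁ ≤ 1 and 0 < a₂ ≤ b₂ ≤ 1 one has C(b₁,b₂) - C(a₁,b₂) - C(b₁,a₂) + C(a₁,a₂) ≥ 0. -/
open Set Real

/-- `x ↦ x ^ c` is convex on `(0, ∞)` for `c ≤ 0`. -/
lemma convexOn_rpow_of_nonpos {c : ℝ} (hc : c ≤ 0) :
    ConvexOn ℝ (Ioi (0 : ℝ)) fun x : ℝ => x ^ c := by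
  apply MonotoneOn.convexOn_of_deriv (convex_Ioi 0)
  · exact fun x hx =>
      ((Real.hasDerivAt_rpow_const (Or.inl (ne_of_gt hx))).continuousAt).continuousWithinAt
  · intro x hx
    rw [interior_Ioi] at hx
    exact ((Real.hasDerivAt_rpow_const (Or.inl (ne_of_gt hx))).differentiableAt).differentiableWithinAt
  · rw [interior_Ioi]
    intro x hx y hy hxy
    rw [Real.deriv_rpow_const x c,
      Real.deriv_rpow_const y c]
    have h1 : y ^ (c - 1) ≤ x ^ (c - 1) :=
      Real.rpow_le_rpow_of_nonpos hx hxy (by linarith)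
    nlinarith [Real.rpow_pos_of_pos hy (c - 1), Real.rpow_pos_of_pos hx (c - 1)]

/-- Four-point inequality for a convex function: increments are larger further right. -/
lemma convex_four_point {c : ℝ} (hc : c ≤ 0) {p q s : ℝ}
    (hp : 0 < p) (hpq : p ≤ q) (hs : 0 ≤ s) :
    (p + s) ^ c + q ^ c ≤ p ^ c + (q + s) ^ c := by
  have hq : 0 < q := lt_of_lt_of_le hp hpq
  rcases eq_or_lt_of_le hs with rfl | hs'
  · simp
  have hD : 0 < q + s - p := by linarith
  set l : ℝ := s / (q + s - p) with hl
  have hl0 : 0 ≤ l := div_nonneg hs (le_of_lt hD)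
  have hl1 : l ≤ 1 := (div_le_one hD).mpr (by linarith)
  have hcv := convexOn_rpow_of_nonpos hc
  have h1 : (p + s) ^ c ≤ (1 - l) * p ^ c + l * (q + s) ^ c := by
    have := hcv.2 (mem_Ioi.mpr hp) (mem_Ioi.mpr (by linarith : (0:ℝ) < q + s))
      (by linarith : (0:ℝ) ≤ 1 - l) hl0 (by ring)
    have harg : (1 - l) • p + l • (q + s) = p + s := by
      simp only [smul_eq_mul, hl]
      field_simp
      ring
    rw [harg] at this
    simpa using this
  have h2 : q ^ c ≤ l * p ^ c + (1 - l) * (q + s) ^ c := by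
    have := hcv.2 (mem_Ioi.mpr hp) (mem_Ioi.mpr (by linarith : (0:ℝ) < q + s))
      hl0 (by linarith : (0:ℝ) ≤ 1 - l) (by ring)
    have harg : l • p + (1 - l) • (q + s) = q := by
      simp only [smul_eq_mul, hl]
      field_simp
      ring
    rw [harg] at this
    simpa using this
  linarith

/-- For every ρ > 0, the bivariate Clayton copula
`C(u,v) = (u^{-ρ} + v^{-ρ} - 1)^{-1/ρ}` is 2-increasing on `(0,1] × (0,1]`. -/
theorem clayton_two_increasing (ρ : ℝ) (hρ : 0 < ρ)
    (C : ℝ → ℝ → ℝ)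
    (hC : ∀ u v : ℝ, C u v = (u ^ (-ρ) + v ^ (-ρ) - 1) ^ (-1 / ρ))
    (a₁ b₁ a₂ b₂ : ℝ)
    (ha₁ : 0 < a₁) (hab₁ : a₁ ≤ b₁) (hb₁ : b₁ ≤ 1)
    (ha₂ : 0 < a₂) (hab₂ : a₂ ≤ b₂) (hb₂ : b₂ ≤ 1) :
    0 ≤ C b₁ b₂ - C a₁ b₂ - C b₁ a₂ + C a₁ a₂ := by
  have hb₁0 : 0 < b₁ := lt_of_lt_of_le ha₁ hab₁
  have hb₂0 : 0 < b₂ := lt_of_lt_of_le ha₂ hab₂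
  set X := b₁ ^ (-ρ) with hX
  set X' := a₁ ^ (-ρ) with hX'
  set Y := b₂ ^ (-ρ) with hY
  set Y' := a₂ ^ (-ρ) with hY'
  have hXX' : X ≤ X' := Real.rpow_le_rpow_of_nonpos ha₁ hab₁ (by linarith)
  have hYY' : Y ≤ Y' := Real.rpow_le_rpow_of_nonpos ha₂ hab₂ (by linarith)
  have hX1 : 1 ≤ X := Real.one_le_rpow_of_pos_of_le_one_of_nonpos hb₁0 hb₁ (by linarith)
  have hY1 : 1 ≤ Y := Real.one_le_rpow_of_pos_of_le_one_of_nonpos hb₂0 hb₂ (by linarith)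
  have hc : -1 / ρ ≤ 0 := by
    apply div_nonpos_of_nonpos_of_nonneg <;> linarith
  have key := convex_four_point hc (p := X + Y - 1) (q := X + Y' - 1) (s := X' - X)
    (by linarith) (by linarith) (by linarith)
  rw [hC, hC, hC, hC]
  have e1 : X + Y - 1 + (X' - X) = X' + Y - 1 := by ring
  have e2 : X + Y' - 1 + (X' - X) = X' + Y' - 1 := by ring
  rw [e1, e2] at key
  linarith
end

section
/- For every ρ ≥ 1, the bivariate Gumbel copula is 2-increasing: for all a₁, b₁, a₂, b₂ with 0 < a₁ ≤ b₁ ≤ 1 and 0 < a₂ ≤ b₂ ≤ 1 one has C(b₁,b₂) - C(a₁,b₂) - C(b₁,a₂) + C(a₁,a₂) ≥ 0. -/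
open Real Set

lemma gumbel_hderiv (c y : ℝ) (t : ℝ) (ht : 0 < t + y) :
    HasDerivAt (fun s : ℝ => Real.exp (-((s + y) ^ c)))
      (-(Real.exp (-((t + y) ^ c)) * (c * (t + y) ^ (c - 1)))) t := by
  have h1 : HasDerivAt (fun s : ℝ => s + y) 1 t := (hasDerivAt_id t).add_const y
  have h2 : HasDerivAt (fun s : ℝ => (s + y) ^ c) (c * (t + y) ^ (c - 1)) t := by
    have := (Real.hasDerivAt_rpow_const (x := t + y) (p := c) (Or.inl ht.ne')).comp t h1
    simpa [Function.comp_def] using this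
  simpa using (h2.neg.exp)

lemma gumbel_h_anti (c : ℝ) (hc0 : 0 < c) (hc1 : c ≤ 1) {s t : ℝ} (hs : 0 < s) (hst : s ≤ t) :
    t ^ (c - 1) * Real.exp (-(t ^ c)) ≤ s ^ (c - 1) * Real.exp (-(s ^ c)) := by
  have ht : 0 < t := hs.trans_le hst
  apply mul_le_mul
  · exact Real.rpow_le_rpow_of_nonpos hs hst (by linarith)
  · exact Real.exp_le_exp.2 (neg_le_neg (Real.rpow_le_rpow hs.le hst hc0.le))
  · positivity
  · positivity

lemma gumbel_super (c : ℝ) (hc0 : 0 < c) (hc1 : c ≤ 1) {x' x y' y : ℝ}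
    (hx' : 0 ≤ x') (hxx : x' ≤ x) (hy' : 0 ≤ y') (hyy : y' ≤ y) :
    Real.exp (-((x + y') ^ c)) + Real.exp (-((x' + y) ^ c)) ≤
      Real.exp (-((x' + y') ^ c)) + Real.exp (-((x + y) ^ c)) := by
  set g : ℝ → ℝ := fun s => Real.exp (-((s + y') ^ c)) - Real.exp (-((s + y) ^ c)) with hg
  have hderivs : ∀ t ∈ Ioo x' x, HasDerivAt g
      (-(Real.exp (-((t + y') ^ c)) * (c * (t + y') ^ (c - 1))) -
        -(Real.exp (-((t + y) ^ c)) * (c * (t + y) ^ (c - 1)))) t := by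
    intro t ht
    have ht0 : 0 < t := lt_of_le_of_lt hx' ht.1
    exact (gumbel_hderiv c y' t (by linarith)).sub (gumbel_hderiv c y t (by linarith))
  have hanti : AntitoneOn g (Icc x' x) := by
    apply antitoneOn_of_deriv_nonpos (convex_Icc x' x)
    · have hcont : ∀ z : ℝ, Continuous fun s : ℝ => Real.exp (-((s + z) ^ c)) := by
        intro z
        have : Continuous fun s : ℝ => (s + z) ^ c := by
          apply Continuous.rpow_const (by continuity)
          intro s; exact Or.inr hc0.le
        exact (this.neg).rexp
      exact ((hcont y').sub (hcont y)).continuousOn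
    · rw [interior_Icc]
      intro t ht
      exact (hderivs t ht).differentiableAt.differentiableWithinAt
    · rw [interior_Icc]
      intro t ht
      rw [(hderivs t ht).deriv]
      have ht0 : 0 < t := lt_of_le_of_lt hx' ht.1
      have ht1 : 0 < t + y' := by linarith
      have := gumbel_h_anti c hc0 hc1 ht1 (by linarith : t + y' ≤ t + y)
      nlinarith [this, hc0]
  have h1 := hanti (left_mem_Icc.2 hxx) (right_mem_Icc.2 hxx) hxx
  simp only [hg] at h1
  linarith

/-- For every ρ ≥ 1, the bivariate Gumbel copula
`C(u,v) = exp(-((-log u)^ρ + (-log v)^ρ)^{1/ρ})` is 2-increasing on `(0,1] × (0,1]`. -/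
theorem gumbel_two_increasing (ρ : ℝ) (hρ : 1 ≤ ρ)
    (C : ℝ → ℝ → ℝ)
    (hC : ∀ u v : ℝ,
      C u v = Real.exp (-((-Real.log u) ^ ρ + (-Real.log v) ^ ρ) ^ (1 / ρ)))
    (a₁ b₁ a₂ b₂ : ℝ)
    (ha₁ : 0 < a₁) (hab₁ : a₁ ≤ b₁) (hb₁ : b₁ ≤ 1)
    (ha₂ : 0 < a₂) (hab₂ : a₂ ≤ b₂) (hb₂ : b₂ ≤ 1) :
    0 ≤ C b₁ b₂ - C a₁ b₂ - C b₁ a₂ + C a₁ a₂ := by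
  have hρ0 : 0 < ρ := by linarith
  have hl : ∀ u v : ℝ, 0 < u → u ≤ v → v ≤ 1 →
      0 ≤ (-Real.log v) ^ ρ ∧ (-Real.log v) ^ ρ ≤ (-Real.log u) ^ ρ := by
    intro u v hu huv hv1
    have hlv : Real.log v ≤ 0 := Real.log_nonpos (by linarith) hv1
    have hlu : Real.log u ≤ Real.log v := Real.log_le_log hu huv
    constructor
    · exact Real.rpow_nonneg (by linarith) ρ
    · exact Real.rpow_le_rpow (by linarith) (by linarith) hρ0.le
  obtain ⟨hx'0, hx'x⟩ := hl a₁ b₁ ha₁ hab₁ hb₁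
  obtain ⟨hy'0, hy'y⟩ := hl a₂ b₂ ha₂ hab₂ hb₂
  have key := gumbel_super (1 / ρ) (by positivity) (by rw [div_le_one hρ0]; linarith)
    hx'0 hx'x hy'0 hy'y
  rw [hC b₁ b₂, hC a₁ b₂, hC b₁ a₂, hC a₁ a₂]
  linarith [key]
end
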